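/- Conversely, if D is an n×n symmetric matrix with zero diagonal such that -(1/2) V D V is positive semi-definite (V = I - (1/n)J the centering matrix), then D is a Euclidean distance matrix: there exist points x_1,...,x_n ∈ R^n with D_{ij} = ||x_i - x_j||^2. -/

import Mathlib

open Matrix

theorem psd_center_implies_edm (n : ℕ) (D : Matrix (Fin n) (Fin n) ℝ)
    (hsymm : D.IsSymm) (hhollow : ∀ i, D i i = 0)
    (hpsd :
      let J : Matrix (Fin n) (Fin n) ℝ := Matrix.of fun _ _ => (1 : ℝ)
      let V : Matrix (Fin n) (Fin n) ℝ := 1 - (n : ℝ)⁻¹ • J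
      ((-(1/2 : ℝ)) • (V * D * V)).PosSemidef) :
    ∃ x : Fin n → EuclideanSpace ℝ (Fin n), ∀ i j, D i j = ‖x i - x j‖ ^ 2 := by
  set J : Matrix (Fin n) (Fin n) ℝ := Matrix.of fun _ _ => (1 : ℝ) with hJ
  set V : Matrix (Fin n) (Fin n) ℝ := 1 - (n : ℝ)⁻¹ • J with hV
  set B : Matrix (Fin n) (Fin n) ℝ := (-(1/2 : ℝ)) • (V * D * V) with hB
  have hpsd' : B.PosSemidef := hpsd
  obtain ⟨C, hC⟩ : ∃ C : Matrix (Fin n) (Fin n) ℝ, B = Cᴴ * C := by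
    open scoped MatrixOrder in
    obtain ⟨C, hC⟩ := CStarAlgebra.nonneg_iff_eq_star_mul_self.mp hpsd'.nonneg
    exact ⟨C, by rw [hC, Matrix.star_eq_conjTranspose]⟩
  -- entry formula for B
  have hBentry : ∀ i j, B i j =
      (-(1/2 : ℝ)) * (D i j - (n : ℝ)⁻¹ * (∑ k, D k j) - (n : ℝ)⁻¹ * (∑ l, D i l)
        + (n : ℝ)⁻¹ * ((n : ℝ)⁻¹ * ∑ l, ∑ k, D k l)) := by
    intro i j
    have hVD : ∀ l, (V * D) i l = D i l - (n : ℝ)⁻¹ * ∑ k, D k l := by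
      intro l
      simp [hV, hJ, Matrix.sub_mul, Matrix.mul_apply, Matrix.sub_apply,
        Matrix.smul_apply, Matrix.one_apply, Finset.mul_sum, sub_mul, ite_mul,
        Finset.sum_sub_distrib, Finset.sum_ite_eq]
    have hstep : (V * D * V) i j
        = ∑ l, (V * D) i l * ((if l = j then (1:ℝ) else 0) - (n : ℝ)⁻¹) := by
      rw [Matrix.mul_apply]
      refine Finset.sum_congr rfl fun l _ => ?_
      simp [hV, hJ, Matrix.sub_apply, Matrix.smul_apply, Matrix.one_apply]
    have expand : ∀ l, (D i l - (n : ℝ)⁻¹ * ∑ k, D k l)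
          * ((if l = j then (1:ℝ) else 0) - (n : ℝ)⁻¹)
        = ((if l = j then D i l else 0) - (if l = j then (n : ℝ)⁻¹ * ∑ k, D k l else 0)
            - (n : ℝ)⁻¹ * D i l) + (n : ℝ)⁻¹ * ((n : ℝ)⁻¹ * ∑ k, D k l) := by
      intro l; by_cases h : l = j <;> simp [h] <;> ring
    rw [hB, Matrix.smul_apply, hstep]
    simp only [hVD]
    rw [Finset.sum_congr rfl fun l _ => expand l, Finset.sum_add_distrib,
      Finset.sum_sub_distrib, Finset.sum_sub_distrib, Finset.sum_ite_eq',
      Finset.sum_ite_eq']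
    simp only [Finset.mem_univ, if_true, smul_eq_mul]
    rw [← Finset.mul_sum, ← Finset.mul_sum, ← Finset.mul_sum]
  -- key identity
  have hkey : ∀ i j, D i j = B i i + B j j - 2 * B i j := by
    intro i j
    have hsij : (∑ k, D k j) = ∑ k, D j k :=
      Finset.sum_congr rfl fun k _ => hsymm.apply j k
    have hsii : (∑ k, D k i) = ∑ k, D i k :=
      Finset.sum_congr rfl fun k _ => hsymm.apply i k
    rw [hBentry, hBentry, hBentry, hhollow i, hhollow j, hsij, hsii]
    ring
  refine ⟨fun i => (WithLp.equiv 2 (Fin n → ℝ)).symm (fun k => C k i), fun i j => ?_⟩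
  have hnorm : ‖(WithLp.equiv 2 (Fin n → ℝ)).symm (fun k => C k i)
      - (WithLp.equiv 2 (Fin n → ℝ)).symm (fun k => C k j)‖ ^ 2
      = ∑ k, (C k i - C k j) ^ 2 := by
    rw [EuclideanSpace.norm_eq]
    rw [Real.sq_sqrt (by positivity)]
    refine Finset.sum_congr rfl fun k _ => ?_
    simp [sq_abs]
  rw [hnorm, hkey i j]
  have hBC : ∀ a b, B a b = ∑ k, C k a * C k b := by
    intro a b
    rw [hC]
    simp [Matrix.mul_apply, Matrix.conjTranspose_apply]
  rw [hBC, hBC, hBC]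
  rw [Finset.sum_congr rfl fun k _ =>
    show (C k i - C k j) ^ 2 = C k i * C k i + C k j * C k j - 2 * (C k i * C k j) by ring]
  rw [Finset.sum_sub_distrib, Finset.sum_add_distrib, ← Finset.mul_sum]
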